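/- Let S be a nonempty set, A a nonempty finite set, d and l positive integers, and let φ : S × A → ℝ^d satisfy ‖φ(s,a)‖₂ ≤ 1 for all (s,a). Let H > 0 and β ≥ 0. For j ∈ {1,2}, let w_{j,1}, …, w_{j,l} ∈ ℝ^d and let Γ_{j,1}, …, Γ_{j,l} be symmetric positive semidefinite d×d matrices, and define V_j(s) = max_{a ∈ A} min_{1 ≤ i ≤ l} min{ H, ⟨w_{j,i}, φ(s,a)⟩ + β·√(φ(s,a)ᵀ Γ_{j,i} φ(s,a)) }. Then sup_{s ∈ S} |V₁(s) − V₂(s)| ≤ max_{1 ≤ i ≤ l} ‖w_{1,i} − w_{2,i}‖₂ + β · max_{1 ≤ i ≤ l} √(‖Γ_{1,i} − Γ_{2,i}‖_F), where ‖·‖_F denotes the Frobenius norm of a matrix. -/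

import Mathlib

open Matrix Finset

private lemma sqrt_sub_sqrt_le_sqrt_abs (x y : ℝ) (hx : 0 ≤ x) (hy : 0 ≤ y) :
    |Real.sqrt x - Real.sqrt y| ≤ Real.sqrt |x - y| := by
  wlog h : y ≤ x generalizing x y
  · rw [abs_sub_comm, abs_sub_comm x y]; exact this y x hy hx (le_of_not_ge h)
  rw [abs_of_nonneg (sub_nonneg.2 (Real.sqrt_le_sqrt h)), abs_of_nonneg (sub_nonneg.2 h)]
  have hxy : (0:ℝ) ≤ x - y := sub_nonneg.2 h
  have key : Real.sqrt x ≤ Real.sqrt (x - y) + Real.sqrt y := by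
    have hnn : (0:ℝ) ≤ Real.sqrt (x - y) + Real.sqrt y := by positivity
    conv_rhs => rw [← Real.sqrt_sq hnn]
    apply Real.sqrt_le_sqrt
    have h1 := Real.sq_sqrt hxy
    have h2 := Real.sq_sqrt hy
    nlinarith [mul_nonneg (Real.sqrt_nonneg (x - y)) (Real.sqrt_nonneg y)]
  linarith

private lemma cs_abs {ι : Type*} [Fintype ι] (f g : ι → ℝ) :
    |∑ i, f i * g i| ≤ Real.sqrt (∑ i, f i ^ 2) * Real.sqrt (∑ i, g i ^ 2) := by
  rw [← Real.sqrt_sq_eq_abs, ← Real.sqrt_mul (by positivity)]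
  exact Real.sqrt_le_sqrt (sum_mul_sq_le_sq_mul_sq _ _ _)

private lemma quad_bound {n : ℕ} (M : Matrix (Fin n) (Fin n) ℝ) (v : Fin n → ℝ) :
    |v ⬝ᵥ M.mulVec v| ≤ Real.sqrt (∑ p, ∑ q, M p q ^ 2) * (v ⬝ᵥ v) := by
  have h1 : v ⬝ᵥ M.mulVec v
      = ∑ x : Fin n × Fin n, M x.1 x.2 * (v x.1 * v x.2) := by
    rw [Fintype.sum_prod_type]
    simp only [dotProduct, mulVec, dotProduct, Finset.mul_sum]
    exact Finset.sum_congr rfl fun p _ => Finset.sum_congr rfl fun q _ => by ring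
  rw [h1]
  have := cs_abs (fun x : Fin n × Fin n => M x.1 x.2) (fun x => v x.1 * v x.2)
  refine this.trans (le_of_eq ?_)
  congr 1
  · rw [Fintype.sum_prod_type]
  · have : ∑ x : Fin n × Fin n, ((fun x : Fin n × Fin n => v x.1 * v x.2) x) ^ 2
        = (∑ i, v i ^ 2) * (∑ i, v i ^ 2) := by
      rw [Fintype.sum_prod_type, Finset.sum_mul_sum]
      exact Finset.sum_congr rfl fun p _ => Finset.sum_congr rfl fun q _ => by ring
    rw [this, Real.sqrt_mul_self (by positivity)]
    simp [dotProduct, sq]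

private lemma abs_ciSup_sub_ciSup {ι : Type*} [Nonempty ι] [Finite ι] (f g : ι → ℝ) {C : ℝ}
    (h : ∀ i, |f i - g i| ≤ C) : |(⨆ i, f i) - ⨆ i, g i| ≤ C := by
  rw [abs_sub_le_iff]
  constructor
  · rw [sub_le_iff_le_add]
    exact ciSup_le fun i => by
      have := (abs_le.1 (h i)).2
      have h2 := le_ciSup (Finite.bddAbove_range g) i
      linarith
  · rw [sub_le_iff_le_add]
    exact ciSup_le fun i => by
      have := (abs_le.1 (h i)).1
      have h2 := le_ciSup (Finite.bddAbove_range f) i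
      linarith

private lemma abs_ciInf_sub_ciInf {ι : Type*} [Nonempty ι] [Finite ι] (f g : ι → ℝ) {C : ℝ}
    (h : ∀ i, |f i - g i| ≤ C) : |(⨅ i, f i) - ⨅ i, g i| ≤ C := by
  rw [abs_sub_le_iff]
  constructor
  · have h1 : ∀ i, (⨅ j, f j) - C ≤ g i := fun i => by
      have := (abs_le.1 (h i)).2
      have h2 := ciInf_le (Finite.bddBelow_range f) i
      linarith
    have := le_ciInf h1
    linarith
  · have h1 : ∀ i, (⨅ j, g j) - C ≤ f i := fun i => by
      have := (abs_le.1 (h i)).1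
      have h2 := ciInf_le (Finite.bddBelow_range g) i
      linarith
    have := le_ciInf h1
    linarith

/-- Contraction estimate: the sup-distance between two max-min truncated optimistic
value functions is bounded by the max distance between the weight vectors plus
`β` times the max square root of the Frobenius distance between the matrices. -/
theorem value_function_contraction
    {S : Type*} [Nonempty S] {A : Type*} [Fintype A] [Nonempty A]
    (d l : ℕ) (hd : 0 < d) (hl : 0 < l)
    (φ : S → A → Fin d → ℝ) (hφ : ∀ s a, Real.sqrt (φ s a ⬝ᵥ φ s a) ≤ 1)
    (H β : ℝ) (hH : 0 < H) (hβ : 0 ≤ β)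
    (w₁ w₂ : Fin l → Fin d → ℝ)
    (Γ₁ Γ₂ : Fin l → Matrix (Fin d) (Fin d) ℝ)
    (hΓ₁ : ∀ i, (Γ₁ i).PosSemidef) (hΓ₂ : ∀ i, (Γ₂ i).PosSemidef)
    (V₁ V₂ : S → ℝ)
    (hV₁ : ∀ s, V₁ s = ⨆ a : A, ⨅ i : Fin l,
      min H (w₁ i ⬝ᵥ φ s a + β * Real.sqrt (φ s a ⬝ᵥ (Γ₁ i).mulVec (φ s a))))
    (hV₂ : ∀ s, V₂ s = ⨆ a : A, ⨅ i : Fin l,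
      min H (w₂ i ⬝ᵥ φ s a + β * Real.sqrt (φ s a ⬝ᵥ (Γ₂ i).mulVec (φ s a)))) :
    ∀ s, |V₁ s - V₂ s| ≤
      (⨆ i : Fin l, Real.sqrt ((w₁ i - w₂ i) ⬝ᵥ (w₁ i - w₂ i)))
      + β * ⨆ i : Fin l,
          Real.sqrt (Real.sqrt (∑ p : Fin d, ∑ q : Fin d, (Γ₁ i p q - Γ₂ i p q) ^ 2)) := by
  intro s
  haveI : Nonempty (Fin l) := ⟨⟨0, hl⟩⟩
  set C₁ : ℝ := ⨆ i : Fin l, Real.sqrt ((w₁ i - w₂ i) ⬝ᵥ (w₁ i - w₂ i)) with hC₁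
  set C₂ : ℝ := ⨆ i : Fin l,
      Real.sqrt (Real.sqrt (∑ p : Fin d, ∑ q : Fin d, (Γ₁ i p q - Γ₂ i p q) ^ 2)) with hC₂
  rw [hV₁ s, hV₂ s]
  refine abs_ciSup_sub_ciSup _ _ fun a => ?_
  refine abs_ciInf_sub_ciInf _ _ fun i => ?_
  have hvv : (0:ℝ) ≤ φ s a ⬝ᵥ φ s a :=
    Finset.sum_nonneg fun j _ => mul_self_nonneg _
  have hvv1 : φ s a ⬝ᵥ φ s a ≤ 1 := by
    have := hφ s a
    nlinarith [Real.sq_sqrt hvv, Real.sqrt_nonneg (φ s a ⬝ᵥ φ s a)]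
  -- per-index bound
  set x₁ := w₁ i ⬝ᵥ φ s a + β * Real.sqrt (φ s a ⬝ᵥ (Γ₁ i).mulVec (φ s a)) with hx₁
  set x₂ := w₂ i ⬝ᵥ φ s a + β * Real.sqrt (φ s a ⬝ᵥ (Γ₂ i).mulVec (φ s a)) with hx₂
  have hmin : |min H x₁ - min H x₂| ≤ |x₁ - x₂| := by
    have := abs_min_sub_min_le_max H x₁ H x₂
    simpa using this
  refine hmin.trans ?_
  have hq₁ : (0:ℝ) ≤ φ s a ⬝ᵥ (Γ₁ i).mulVec (φ s a) := by
    have := (hΓ₁ i).dotProduct_mulVec_nonneg (φ s a)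
    simpa using this
  have hq₂ : (0:ℝ) ≤ φ s a ⬝ᵥ (Γ₂ i).mulVec (φ s a) := by
    have := (hΓ₂ i).dotProduct_mulVec_nonneg (φ s a)
    simpa using this
  have hw : |w₁ i ⬝ᵥ φ s a - w₂ i ⬝ᵥ φ s a|
      ≤ Real.sqrt ((w₁ i - w₂ i) ⬝ᵥ (w₁ i - w₂ i)) := by
    have h1 : w₁ i ⬝ᵥ φ s a - w₂ i ⬝ᵥ φ s a = ∑ j, (w₁ i - w₂ i) j * φ s a j := by
      simp [dotProduct, Finset.sum_sub_distrib, sub_mul]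
    rw [h1]
    have := cs_abs (fun j => (w₁ i - w₂ i) j) (fun j => φ s a j)
    refine this.trans ?_
    have e1 : ∑ j, (w₁ i - w₂ i) j ^ 2 = (w₁ i - w₂ i) ⬝ᵥ (w₁ i - w₂ i) := by
      simp [dotProduct, sq]
    have e2 : Real.sqrt (∑ j, φ s a j ^ 2) ≤ 1 := by
      have : ∑ j, φ s a j ^ 2 = φ s a ⬝ᵥ φ s a := by simp [dotProduct, sq]
      rw [this]; exact hφ s a
    rw [e1]
    calc Real.sqrt ((w₁ i - w₂ i) ⬝ᵥ (w₁ i - w₂ i)) * Real.sqrt (∑ j, φ s a j ^ 2)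
        ≤ Real.sqrt ((w₁ i - w₂ i) ⬝ᵥ (w₁ i - w₂ i)) * 1 := by
          exact mul_le_mul_of_nonneg_left e2 (Real.sqrt_nonneg _)
      _ = _ := mul_one _
  have hΓ : |Real.sqrt (φ s a ⬝ᵥ (Γ₁ i).mulVec (φ s a))
      - Real.sqrt (φ s a ⬝ᵥ (Γ₂ i).mulVec (φ s a))|
      ≤ Real.sqrt (Real.sqrt (∑ p, ∑ q, (Γ₁ i p q - Γ₂ i p q) ^ 2)) := by
    refine (sqrt_sub_sqrt_le_sqrt_abs _ _ hq₁ hq₂).trans (Real.sqrt_le_sqrt ?_)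
    have hdiff : φ s a ⬝ᵥ (Γ₁ i).mulVec (φ s a) - φ s a ⬝ᵥ (Γ₂ i).mulVec (φ s a)
        = φ s a ⬝ᵥ (Γ₁ i - Γ₂ i).mulVec (φ s a) := by
      rw [Matrix.sub_mulVec, dotProduct_sub]
    rw [hdiff]
    refine (quad_bound (Γ₁ i - Γ₂ i) (φ s a)).trans ?_
    have e : ∑ p, ∑ q, (Γ₁ i - Γ₂ i) p q ^ 2 = ∑ p, ∑ q, (Γ₁ i p q - Γ₂ i p q) ^ 2 := by
      simp [Matrix.sub_apply]
    rw [e]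
    nlinarith [Real.sqrt_nonneg (∑ p, ∑ q, (Γ₁ i p q - Γ₂ i p q) ^ 2)]
  have hT₁ : Real.sqrt ((w₁ i - w₂ i) ⬝ᵥ (w₁ i - w₂ i)) ≤ C₁ := by
    rw [hC₁]
    exact le_ciSup (f := fun i => Real.sqrt ((w₁ i - w₂ i) ⬝ᵥ (w₁ i - w₂ i)))
      (Finite.bddAbove_range _) i
  have hT₂ : Real.sqrt (Real.sqrt (∑ p, ∑ q, (Γ₁ i p q - Γ₂ i p q) ^ 2)) ≤ C₂ := by
    rw [hC₂]
    exact le_ciSup (f := fun i => Real.sqrt (Real.sqrt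
      (∑ p : Fin d, ∑ q : Fin d, (Γ₁ i p q - Γ₂ i p q) ^ 2))) (Finite.bddAbove_range _) i
  calc |x₁ - x₂|
      = |(w₁ i ⬝ᵥ φ s a - w₂ i ⬝ᵥ φ s a)
        + β * (Real.sqrt (φ s a ⬝ᵥ (Γ₁ i).mulVec (φ s a))
             - Real.sqrt (φ s a ⬝ᵥ (Γ₂ i).mulVec (φ s a)))| := by rw [hx₁, hx₂]; ring_nf
    _ ≤ |w₁ i ⬝ᵥ φ s a - w₂ i ⬝ᵥ φ s a|
        + |β * (Real.sqrt (φ s a ⬝ᵥ (Γ₁ i).mulVec (φ s a))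
             - Real.sqrt (φ s a ⬝ᵥ (Γ₂ i).mulVec (φ s a)))| := abs_add_le _ _
    _ ≤ C₁ + β * C₂ := by
        rw [abs_mul, abs_of_nonneg hβ]
        exact add_le_add (hw.trans hT₁)
          (mul_le_mul_of_nonneg_left (hΓ.trans hT₂) hβ)
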